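/- Let (T_k)_{k∈ℕ} be a sequence of bounded linear operators on a complex Hilbert space H and C ≥ 0. Suppose that ‖∑_{k∈F} ε_k T_k‖ ≤ C for every finite set F ⊆ ℕ and every family of complex numbers (ε_k)_{k∈F} with |ε_k| ≤ 1 for all k. Then for every vector x ∈ H the partial sums ∑_{k=1}^n T_k x converge in H as n → ∞, and the limit operator S (defined by S x = lim_n ∑_{k=1}^n T_k x) is a bounded linear operator with ‖S‖ ≤ C. -/

import Mathlib

open Filter Finset

private lemma exists_signs {H : Type*} [NormedAddCommGroup H] [InnerProductSpace ℂ H]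
    (v : ℕ → H) (G : Finset ℕ) :
    ∃ ε : ℕ → ℂ, (∀ j, ‖ε j‖ ≤ 1) ∧
      ∑ j ∈ G, ‖v j‖ ^ 2 ≤ ‖∑ j ∈ G, ε j • v j‖ ^ 2 := by
  classical
  induction G using Finset.induction_on with
  | empty => exact ⟨fun _ => 1, fun _ => by simp, by simp⟩
  | insert _ _ ha =>
    rename_i a G _
    obtain ⟨ε, hε, hsum⟩ := ‹∃ _, _›
    have hpar := parallelogram_law_with_norm ℂ (v a) (∑ j ∈ G, ε j • v j)
    set S := ∑ j ∈ G, ε j • v j with hS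
    have key : ‖v a‖ ^ 2 + ‖S‖ ^ 2 ≤ ‖v a + S‖ ^ 2 ∨
        ‖v a‖ ^ 2 + ‖S‖ ^ 2 ≤ ‖v a - S‖ ^ 2 := by
      by_contra hcon
      push_neg at hcon
      nlinarith [hcon.1, hcon.2, hpar]
    rcases key with hk | hk
    · refine ⟨Function.update ε a 1, ?_, ?_⟩
      · intro j
        rcases eq_or_ne j a with rfl | hj
        · simp
        · simpa [Function.update_of_ne hj] using hε j
      · rw [Finset.sum_insert ha, Finset.sum_insert ha]
        have he : ∑ j ∈ G, Function.update ε a 1 j • v j = S := by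
          rw [hS]
          exact Finset.sum_congr rfl fun j hj => by
            rw [Function.update_of_ne (by rintro rfl; exact ha hj)]
        rw [he, Function.update_self, one_smul]
        calc ‖v a‖ ^ 2 + ∑ j ∈ G, ‖v j‖ ^ 2 ≤ ‖v a‖ ^ 2 + ‖S‖ ^ 2 := by linarith
          _ ≤ ‖v a + S‖ ^ 2 := hk
    · refine ⟨Function.update (fun j => -ε j) a 1, ?_, ?_⟩
      · intro j
        rcases eq_or_ne j a with rfl | hj
        · simp
        · simpa [Function.update_of_ne hj] using hε j
      · rw [Finset.sum_insert ha, Finset.sum_insert ha]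
        have he : ∑ j ∈ G, Function.update (fun j => -ε j) a 1 j • v j = -S := by
          rw [hS, ← Finset.sum_neg_distrib]
          exact Finset.sum_congr rfl fun j hj => by
            rw [Function.update_of_ne (by rintro rfl; exact ha hj)]
            simp [neg_smul]
        rw [he, Function.update_self, one_smul]
        have hv : v a + -S = v a - S := by abel
        rw [hv]
        calc ‖v a‖ ^ 2 + ∑ j ∈ G, ‖v j‖ ^ 2 ≤ ‖v a‖ ^ 2 + ‖S‖ ^ 2 := by linarith
          _ ≤ ‖v a - S‖ ^ 2 := hk

/-- If `‖∑_{k ∈ F} ε k • T k‖ ≤ C` for every finite `F` and every family of unimodular-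
bounded scalars `ε`, then `∑ T k` converges in the strong operator topology to an
operator of norm at most `C`. -/
theorem sot_convergence_of_unconditional_bound {H : Type*} [NormedAddCommGroup H]
    [InnerProductSpace ℂ H] [CompleteSpace H] (T : ℕ → (H →L[ℂ] H)) (C : ℝ) (hC : 0 ≤ C)
    (h : ∀ (F : Finset ℕ) (ε : ℕ → ℂ), (∀ k ∈ F, ‖ε k‖ ≤ 1) →
      ‖∑ k ∈ F, ε k • T k‖ ≤ C) :
    ∃ S : H →L[ℂ] H,
      (∀ x : H, Filter.Tendsto (fun n => ∑ k ∈ Finset.range n, T k x)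
        Filter.atTop (nhds (S x))) ∧
      ‖S‖ ≤ C := by
  classical
  -- Step 1: for every x, partial sums are Cauchy
  have hcauchy : ∀ x : H, CauchySeq (fun n => ∑ k ∈ Finset.range n, T k x) := by
    intro x
    rw [Metric.cauchySeq_iff]
    by_contra hcon
    push_neg at hcon
    obtain ⟨δ, hδ, hbad⟩ := hcon
    have hbad' : ∀ N : ℕ, ∃ n m : ℕ, N ≤ n ∧ n ≤ m ∧ δ ≤ ‖∑ k ∈ Finset.Ico n m, T k x‖ := by
      intro N
      obtain ⟨p, hp, q, hq, hd⟩ := hbad N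
      rcases le_total p q with hpq | hpq
      · refine ⟨p, q, hp, hpq, ?_⟩
        rw [dist_comm, dist_eq_norm, ← Finset.sum_Ico_eq_sub _ hpq] at hd
        exact hd
      · refine ⟨q, p, hq, hpq, ?_⟩
        rw [dist_eq_norm, ← Finset.sum_Ico_eq_sub _ hpq] at hd
        exact hd
    choose f g hf hfg hnorm using hbad'
    -- recursively defined starting points
    let N : ℕ → ℕ := fun j => Nat.rec 0 (fun _ p => g p) j
    have hNsucc : ∀ j, N (j + 1) = g (N j) := fun j => rfl
    have hNmono : Monotone N := by
      apply monotone_nat_of_le_succ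
      intro j
      rw [hNsucc]
      exact le_trans (hf (N j)) (hfg (N j))
    set a : ℕ → ℕ := fun j => f (N j) with ha
    set b : ℕ → ℕ := fun j => g (N j) with hb
    have hba : ∀ i j, i < j → b i ≤ a j := by
      intro i j hij
      calc b i = N (i + 1) := rfl
        _ ≤ N j := hNmono hij
        _ ≤ f (N j) := hf _
    have huniq : ∀ i j k, k ∈ Finset.Ico (a i) (b i) → k ∈ Finset.Ico (a j) (b j) → i = j := by
      intro i j k hki hkj
      by_contra hne
      rcases Ne.lt_or_gt hne with hij | hij
      · have := hba i j hij
        rw [Finset.mem_Ico] at hki hkj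
        omega
      · have := hba j i hij
        rw [Finset.mem_Ico] at hki hkj
        omega
    set v : ℕ → H := fun j => ∑ k ∈ Finset.Ico (a j) (b j), T k x with hv
    have hvδ : ∀ j, δ ≤ ‖v j‖ := fun j => hnorm (N j)
    -- choose J large
    obtain ⟨J, hJ⟩ := exists_nat_gt ((C * ‖x‖) ^ 2 / δ ^ 2)
    obtain ⟨ε, hε, hsum⟩ := exists_signs v (Finset.range J)
    -- define the scalar family on ℕ
    set η : ℕ → ℂ := fun k =>
      if hk : ∃ j, k ∈ Finset.Ico (a j) (b j) then ε hk.choose else 0 with hη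
    have hη1 : ∀ k, ‖η k‖ ≤ 1 := by
      intro k
      simp only [hη]
      split
      · exact hε _
      · simp
    have hηval : ∀ j k, k ∈ Finset.Ico (a j) (b j) → η k = ε j := by
      intro j k hk
      simp only [hη]
      have hex : ∃ j, k ∈ Finset.Ico (a j) (b j) := ⟨j, hk⟩
      rw [dif_pos hex]
      congr 1
      exact huniq _ _ k hex.choose_spec hk
    set F : Finset ℕ := (Finset.range J).biUnion (fun j => Finset.Ico (a j) (b j)) with hF
    have hdisj : (↑(Finset.range J) : Set ℕ).PairwiseDisjoint
        (fun j => Finset.Ico (a j) (b j)) := by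
      intro i _ j _ hij
      refine Finset.disjoint_left.mpr fun k hki hkj => hij (huniq i j k hki hkj)
    have hop := h F η (fun k _ => hη1 k)
    have happ : ‖(∑ k ∈ F, η k • T k) x‖ ≤ C * ‖x‖ :=
      le_trans ((∑ k ∈ F, η k • T k).le_opNorm x)
        (mul_le_mul_of_nonneg_right hop (norm_nonneg x))
    have heq : (∑ k ∈ F, η k • T k) x = ∑ j ∈ Finset.range J, ε j • v j := by
      rw [ContinuousLinearMap.sum_apply, hF, Finset.sum_biUnion hdisj]
      refine Finset.sum_congr rfl fun j _ => ?_
      rw [hv]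
      rw [Finset.smul_sum]
      refine Finset.sum_congr rfl fun k hk => ?_
      rw [hηval j k hk]
      rfl
    rw [heq] at happ
    -- now derive the contradiction
    have hJδ : (J : ℝ) * δ ^ 2 ≤ ∑ j ∈ Finset.range J, ‖v j‖ ^ 2 := by
      calc (J : ℝ) * δ ^ 2 = ∑ _j ∈ Finset.range J, δ ^ 2 := by
            rw [Finset.sum_const, Finset.card_range, nsmul_eq_mul]
        _ ≤ ∑ j ∈ Finset.range J, ‖v j‖ ^ 2 :=
            Finset.sum_le_sum fun j _ => pow_le_pow_left₀ hδ.le (hvδ j) 2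
    have hfinal : (J : ℝ) * δ ^ 2 ≤ (C * ‖x‖) ^ 2 := by
      refine le_trans hJδ (le_trans hsum ?_)
      exact pow_le_pow_left₀ (norm_nonneg _) happ 2
    have hδ2 : (0 : ℝ) < δ ^ 2 := by positivity
    rw [div_lt_iff₀ hδ2] at hJ
    linarith
  -- Step 2: extract limits
  have hlim : ∀ x : H, ∃ y : H,
      Filter.Tendsto (fun n => ∑ k ∈ Finset.range n, T k x) Filter.atTop (nhds y) :=
    fun x => cauchySeq_tendsto_of_complete (hcauchy x)
  choose L hL using hlim
  -- bound on partial sums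
  have hbound : ∀ (x : H) (n : ℕ), ‖∑ k ∈ Finset.range n, T k x‖ ≤ C * ‖x‖ := by
    intro x n
    have h1 : ‖∑ k ∈ Finset.range n, T k‖ ≤ C := by
      have := h (Finset.range n) (fun _ => 1) (fun k _ => by simp)
      simpa using this
    calc ‖∑ k ∈ Finset.range n, T k x‖ = ‖(∑ k ∈ Finset.range n, T k) x‖ := by
          rw [ContinuousLinearMap.sum_apply]
      _ ≤ ‖∑ k ∈ Finset.range n, T k‖ * ‖x‖ := ContinuousLinearMap.le_opNorm _ x
      _ ≤ C * ‖x‖ := mul_le_mul_of_nonneg_right h1 (norm_nonneg x)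
  have hLbound : ∀ x : H, ‖L x‖ ≤ C * ‖x‖ := by
    intro x
    exact le_of_tendsto' ((hL x).norm) (hbound x)
  -- linearity
  have hadd : ∀ x y : H, L (x + y) = L x + L y := by
    intro x y
    refine tendsto_nhds_unique ?_ ((hL x).add (hL y))
    have : (fun n => ∑ k ∈ Finset.range n, T k (x + y)) =
        fun n => (∑ k ∈ Finset.range n, T k x) + ∑ k ∈ Finset.range n, T k y := by
      funext n
      rw [← Finset.sum_add_distrib]
      exact Finset.sum_congr rfl fun k _ => (T k).map_add x y
    rw [← this]
    exact hL (x + y)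
  have hsmul : ∀ (c : ℂ) (x : H), L (c • x) = c • L x := by
    intro c x
    refine tendsto_nhds_unique ?_ ((hL x).const_smul c)
    have : (fun n => ∑ k ∈ Finset.range n, T k (c • x)) =
        fun n => c • ∑ k ∈ Finset.range n, T k x := by
      funext n
      rw [Finset.smul_sum]
      exact Finset.sum_congr rfl fun k _ => (T k).map_smul c x
    rw [← this]
    exact hL (c • x)
  let Slin : H →ₗ[ℂ] H :=
    { toFun := L
      map_add' := hadd
      map_smul' := hsmul }
  refine ⟨LinearMap.mkContinuous Slin C hLbound, fun x => hL x, ?_⟩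
  exact LinearMap.mkContinuous_norm_le Slin hC hLbound
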